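/- If p is odd, then the odd-index Faber polynomials of p have the generating function log((p(z)−w)/z) − log((p(z)+w)/z) = −Σ_{n≥0} (2z^{−2n−1}/(2n+1)) Φ_{2n+1}(w), as an identity in R[w][[z^{−1}]] (informally, log((p(z)−w)/(p(z)+w)) = −Σ_{n≥0} (2z^{−2n−1}/(2n+1)) Φ_{2n+1}(w)). -/

import Mathlib

noncomputable section

/-- The series `h ∈ R[w][[z⁻¹]]` with `(p(z) − w)/z = 1 + h`, for
`p(z) = z + Σ_{j≥1} c_j z^{−j}`; the power series variable is `u = z⁻¹`. -/
def hSer {R : Type*} [CommRing R] (c : ℕ → R) : PowerSeries (Polynomial R) :=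
  PowerSeries.mk fun k =>
    if k = 0 then 0 else if k = 1 then -Polynomial.X else Polynomial.C (c (k - 1))

/-- The series `h' ∈ R[w][[z⁻¹]]` with `(p(z) + w)/z = 1 + h'`. -/
def hSerP {R : Type*} [CommRing R] (c : ℕ → R) : PowerSeries (Polynomial R) :=
  PowerSeries.mk fun k =>
    if k = 0 then 0 else if k = 1 then Polynomial.X else Polynomial.C (c (k - 1))

/-- `log (1 + h) = Σ_{k≥1} (−1)^{k−1} h^k / k`, defined coefficientwise (the coefficient of
`u^m` only receives contributions from `k ≤ m` when `h` has zero constant term). -/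
def logOneAdd {A : Type*} [CommRing A] [Algebra ℚ A] (h : PowerSeries A) : PowerSeries A :=
  PowerSeries.mk fun m =>
    ∑ k ∈ Finset.Icc 1 m, ((-1 : ℚ) ^ (k - 1) * (k : ℚ)⁻¹) • PowerSeries.coeff m (h ^ k)

/-- `Φ` is the family of Faber polynomials of `p(z) = z + Σ_{j≥1} c_j z^{−j}`, i.e.
`log ((p(z) − w)/z) = − Σ_{n≥1} (z^{−n}/n) Φ_n(w)` in `R[w][[z⁻¹]]`. -/
def FaberRel {R : Type*} [CommRing R] [Algebra ℚ R] (c : ℕ → R) (Φ : ℕ → Polynomial R) : Prop :=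
  logOneAdd (hSer c) = PowerSeries.mk fun n => if n = 0 then 0 else (-(n : ℚ)⁻¹) • Φ n

theorem stmt7 {R : Type*} [CommRing R] [Algebra ℚ R] (c : ℕ → R) (Φ : ℕ → Polynomial R)
    (hΦ : FaberRel c Φ) (hodd : ∀ j, 1 ≤ j → j % 2 = 0 → c j = 0) :
    logOneAdd (hSer c) - logOneAdd (hSerP c)
      = PowerSeries.mk fun m =>
          if m % 2 = 1 then ((-2 : ℚ) * (m : ℚ)⁻¹) • Φ m else 0 := by
  have hre : hSerP c = PowerSeries.rescale (-1) (hSer c) := by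
    apply PowerSeries.ext; intro k
    rw [PowerSeries.coeff_rescale]
    simp only [hSer, hSerP, PowerSeries.coeff_mk]
    match k with
    | 0 => simp
    | 1 => simp
    | (k+2) =>
      simp only [show k + 2 - 1 = k + 1 from rfl, show k + 2 ≠ 0 by omega,
        show k + 2 ≠ 1 by omega, if_false]
      by_cases hk : (k + 1) % 2 = 0
      · rw [hodd (k + 1) (by omega) hk]
        simp
      · have : (-1 : Polynomial R) ^ (k + 2) = 1 :=
          Even.neg_one_pow (by rw [Nat.even_iff]; omega)
        rw [this, one_mul]
  have key : ∀ m, PowerSeries.coeff m (logOneAdd (hSerP c)) =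
      (-1 : Polynomial R) ^ m * PowerSeries.coeff m (logOneAdd (hSer c)) := by
    intro m
    simp only [logOneAdd, PowerSeries.coeff_mk, hre]
    rw [Finset.mul_sum]
    refine Finset.sum_congr rfl fun k _ => ?_
    rw [← map_pow, PowerSeries.coeff_rescale, mul_smul_comm]
  rw [FaberRel] at hΦ
  ext m
  rw [map_sub, key, hΦ]
  simp only [PowerSeries.coeff_mk]
  rcases Nat.eq_zero_or_pos m with hm | hm
  · subst hm; simp
  · rw [if_neg (by omega)]
    by_cases hpar : m % 2 = 1
    · rw [if_pos hpar]
      have h1 : (-1 : Polynomial R) ^ m = -1 :=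
        Odd.neg_one_pow (by rw [Nat.odd_iff]; exact hpar)
      rw [h1, neg_one_mul, sub_neg_eq_add, ← add_smul]
      congr 1
      ring
    · rw [if_neg hpar]
      have h1 : (-1 : Polynomial R) ^ m = 1 :=
        Even.neg_one_pow (by rw [Nat.even_iff]; omega)
      rw [h1, one_mul, sub_self]

end
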